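/- arXiv:1712.03196 — 2 statements merged into one kernel-verified Lean document; each statement's English description precedes it below -/
import Mathlib

section
/- For every graph G and odd k, the graphs Γ_k(Ω_k(G)) and G are homomorphically equivalent, as are Γ_k(Λ_k(G)) and G. -/
/-- A finite graph: symmetric edge relation, loops allowed. -/
structure FGraph where
  V : Type
  Adj : V → V → Prop
  symm : ∀ {u v : V}, Adj u v → Adj v u
  [fin : Finite V]

attribute [instance] FGraph.fin

/-- Existence of a graph homomorphism. -/
def FGraph.Hom (G H : FGraph) : Prop :=
  ∃ f : G.V → H.V, ∀ {u v : G.V}, G.Adj u v → H.Adj (f u) (f v)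

/-- Homomorphic equivalence. -/
def FGraph.HomEquiv (G H : FGraph) : Prop := G.Hom H ∧ H.Hom G

/-- Tensor (categorical) product of graphs. -/
def FGraph.prod (G H : FGraph) : FGraph where
  V := G.V × H.V
  Adj := fun a b => G.Adj a.1 b.1 ∧ H.Adj a.2 b.2
  symm := fun h => ⟨G.symm h.1, H.symm h.2⟩

/-- A walk of length `n` from `u` to `v`. -/
def FGraph.Walk (G : FGraph) (n : ℕ) (u v : G.V) : Prop :=
  ∃ w : ℕ → G.V, w 0 = u ∧ w n = v ∧ ∀ i < n, G.Adj (w i) (w (i+1))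

/-- The `k`-th power graph `Γ_k(G)`. -/
def FGraph.pow (G : FGraph) (k : ℕ) : FGraph where
  V := G.V
  Adj := fun u v => G.Walk k u v
  symm := by
    rintro u v ⟨w, h0, hk, hadj⟩
    refine ⟨fun i => w (k - i), by simpa using hk, by simpa using h0, fun i hi => ?_⟩
    have h1 : k - (i+1) + 1 = k - i := by omega
    have h2 := hadj (k - (i+1)) (by omega)
    rw [h1] at h2
    exact G.symm h2

/-- Raw vertices for the `k`-subdivision: original vertices plus internal path
vertices `(u,v,i)` with `uv` an edge and `0 < i < k`. -/
abbrev FGraph.SubdivRaw (G : FGraph) (k : ℕ) : Type :=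
  G.V ⊕ {p : G.V × G.V × Fin (k+1) // G.Adj p.1 p.2.1 ∧ 0 < p.2.2.val ∧ p.2.2.val < k}

/-- Identification `(u,v,i) ~ (v,u,k-i)` of internal vertices. -/
def FGraph.subdivRel (G : FGraph) (k : ℕ) : G.SubdivRaw k → G.SubdivRaw k → Prop :=
  fun a b => ∃ p q, a = Sum.inr p ∧ b = Sum.inr q ∧
    p.1.1 = q.1.2.1 ∧ p.1.2.1 = q.1.1 ∧ p.1.2.2.val + q.1.2.2.val = k

/-- Adjacency on raw subdivision vertices. -/
def FGraph.subdivAdjRaw (G : FGraph) (k : ℕ) : G.SubdivRaw k → G.SubdivRaw k → Prop := fun a b =>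
  match a, b with
  | .inl u, .inl v => k = 1 ∧ G.Adj u v
  | .inl u, .inr p => (p.1.1 = u ∧ p.1.2.2.val = 1) ∨ (p.1.2.1 = u ∧ p.1.2.2.val = k - 1)
  | .inr p, .inl u => (p.1.1 = u ∧ p.1.2.2.val = 1) ∨ (p.1.2.1 = u ∧ p.1.2.2.val = k - 1)
  | .inr p, .inr q =>
      (p.1.1 = q.1.1 ∧ p.1.2.1 = q.1.2.1 ∧
        (p.1.2.2.val + 1 = q.1.2.2.val ∨ q.1.2.2.val + 1 = p.1.2.2.val)) ∨
      (p.1.1 = q.1.2.1 ∧ p.1.2.1 = q.1.1 ∧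
        (p.1.2.2.val + q.1.2.2.val = k + 1 ∨ p.1.2.2.val + q.1.2.2.val = k - 1))

/-- The `k`-subdivision `Λ_k(G)`: every edge replaced by a path with `k` edges. -/
def FGraph.subdiv (G : FGraph) (k : ℕ) : FGraph where
  V := Quot (G.subdivRel k)
  Adj := fun x y => ∃ a b, Quot.mk _ a = x ∧ Quot.mk _ b = y ∧
    (G.subdivAdjRaw k a b ∨ G.subdivAdjRaw k b a)
  symm := fun ⟨a, b, ha, hb, h⟩ => ⟨b, a, hb, ha, h.symm⟩

/-- `A` joined to `B`: every vertex of `A` adjacent to every vertex of `B`. -/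
def FGraph.Join (G : FGraph) (A B : Set G.V) : Prop := ∀ a ∈ A, ∀ b ∈ B, G.Adj a b

/-- Vertices of `Ω_{2ℓ+1}(G)`: tuples `(A_0, …, A_ℓ)` of vertex subsets with `A_0`
a singleton and `A_{i-1}` joined to `A_i`. -/
abbrev FGraph.OmegaVert (G : FGraph) (l : ℕ) : Type :=
  {A : Fin (l+1) → Set G.V //
    (∃ v, A 0 = {v}) ∧ ∀ i : Fin l, G.Join (A i.castSucc) (A i.succ)}

/-- The graph `Ω_{2ℓ+1}(G)`, right adjoint to the `(2ℓ+1)`-st power functor. -/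
def FGraph.omega (G : FGraph) (l : ℕ) : FGraph where
  V := G.OmegaVert l
  Adj := fun A B =>
    (∀ i : Fin l, A.1 i.castSucc ⊆ B.1 i.succ ∧ B.1 i.castSucc ⊆ A.1 i.succ) ∧
    G.Join (A.1 (Fin.last l)) (B.1 (Fin.last l))
  symm := fun {A B} h =>
    ⟨fun i => ⟨(h.1 i).2, (h.1 i).1⟩, fun b hb a ha => G.symm (h.2 a ha b hb)⟩

/-- A multiplicative graph. -/
def FGraph.Multiplicative (K : FGraph) : Prop :=
  ∀ G H : FGraph, (G.prod H).Hom K → G.Hom K ∨ H.Hom K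

/-- A (thin) graph functor. -/
def IsGraphFunctor (F : FGraph → FGraph) : Prop :=
  ∀ G H : FGraph, G.Hom H → (F G).Hom (F H)

namespace PfAux

lemma hom_comp {G H K : FGraph} (h1 : G.Hom H) (h2 : H.Hom K) : G.Hom K := by
  obtain ⟨f, hf⟩ := h1; obtain ⟨g, hg⟩ := h2
  exact ⟨g ∘ f, fun h => hg (hf h)⟩

lemma pow_hom {G H : FGraph} (k : ℕ) (h : G.Hom H) : (G.pow k).Hom (H.pow k) := by
  obtain ⟨f, hf⟩ := h
  refine ⟨f, ?_⟩
  rintro u v ⟨w, h0, hk, hadj⟩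
  exact ⟨f ∘ w, by simp [h0], by simp [hk], fun i hi => hf (hadj i hi)⟩

section Omega
variable (G : FGraph) (l : ℕ)

/-- counit : Γ_{2l+1}(Ω_l(G)) → G -/
lemma mem_zero (X : G.OmegaVert l) : X.2.1.choose ∈ X.1 0 :=
  (Set.eq_singleton_iff_unique_mem.mp X.2.1.choose_spec).1

lemma counit : ((G.omega l).pow (2*l+1)).Hom G := by
  classical
  refine ⟨fun A => A.2.1.choose, ?_⟩
  rintro A B ⟨w, h0, hk, hadj⟩
  have key : ∀ (w : ℕ → (G.omega l).V),
      (∀ i < 2*l+1, (G.omega l).Adj (w i) (w (i+1))) →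
      ∀ t, t ≤ l → ∀ x, x ∈ (w 0).1 0 → ∀ (ht2 : t < l + 1), x ∈ (w t).1 ⟨t, ht2⟩ := by
    intro w hadj t
    induction t with
    | zero => intro _ x hx _; exact hx
    | succ t ih =>
      intro ht x hx ht2
      have h := ((hadj t (by omega)).1 ⟨t, by omega⟩).1
      exact h (ih (by omega) x hx (by omega))
  have hx0 : A.2.1.choose ∈ (w 0).1 0 := by rw [h0]; exact mem_zero G l A
  have hx : A.2.1.choose ∈ (w l).1 ⟨l, by omega⟩ := key w hadj l le_rfl _ hx0 (by omega)
  set w' : ℕ → (G.omega l).V := fun i => w (2*l+1 - i) with hw'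
  have hadj' : ∀ i < 2*l+1, (G.omega l).Adj (w' i) (w' (i+1)) := by
    intro i hi
    have h1 : 2*l+1 - (i+1) + 1 = 2*l+1 - i := by omega
    have h2 := hadj (2*l+1 - (i+1)) (by omega)
    rw [h1] at h2
    exact (G.omega l).symm h2
  have hy0 : B.2.1.choose ∈ (w' 0).1 0 := by
    have he : w' 0 = B := by
      show w (2*l+1-0) = B
      rw [Nat.sub_zero, hk]
    rw [he]; exact mem_zero G l B
  have hy : B.2.1.choose ∈ (w (l+1)).1 ⟨l, by omega⟩ := by
    have hmem := key w' hadj' l le_rfl _ hy0 (by omega)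
    have he : w' l = w (l+1) := by show w (2*l+1-l) = w (l+1); congr 1; omega
    rwa [he] at hmem
  have hj := (hadj l (by omega)).2
  exact hj _ hx _ hy

end Omega

section Subdiv
variable (G : FGraph) (l : ℕ)

/-- unit : G → Γ_{2l+1}(Λ_{2l+1}(G)) -/
lemma unit : G.Hom ((G.subdiv (2*l+1)).pow (2*l+1)) := by
  refine ⟨fun v => Quot.mk _ (Sum.inl v), ?_⟩
  intro u v huv
  refine ⟨fun i => (if h : 0 < i ∧ i < 2*l+1 then
      Quot.mk _ (Sum.inr ⟨(u, v, ⟨i, by omega⟩), huv, h.1, h.2⟩)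
    else if i = 0 then Quot.mk _ (Sum.inl u) else Quot.mk _ (Sum.inl v) : Quot (G.subdivRel (2*l+1))), ?_, ?_, ?_⟩
  · beta_reduce; rw [dif_neg (by omega), if_pos rfl]
  · beta_reduce; rw [dif_neg (by omega), if_neg (by omega)]
  · intro i hi
    by_cases h0 : i = 0
    · subst h0
      by_cases h1 : 2*l+1 = 1
      · refine ⟨Sum.inl u, Sum.inl v, by beta_reduce; rw [dif_neg (by omega), if_pos rfl], ?_,
          Or.inl ⟨h1, huv⟩⟩
        beta_reduce; rw [dif_neg (by omega), if_neg (by omega)]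
      · refine ⟨Sum.inl u, Sum.inr ⟨(u, v, ⟨1, by omega⟩),
          huv, by show (0:ℕ) < 1; omega, by show (1:ℕ) < 2*l+1; omega⟩,
          by beta_reduce; rw [dif_neg (by omega), if_pos rfl], ?_, Or.inl (Or.inl ⟨rfl, rfl⟩)⟩
        beta_reduce; rw [dif_pos (by omega)]
    · by_cases h2 : i + 1 < 2*l+1
      · refine ⟨Sum.inr ⟨(u, v, ⟨i, by omega⟩),
            huv, by show 0 < i; omega, by show i < 2*l+1; omega⟩,
          Sum.inr ⟨(u, v, ⟨i+1, by omega⟩),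
            huv, by show 0 < i+1; omega, by show i+1 < 2*l+1; omega⟩,
          by beta_reduce; rw [dif_pos (by omega)], by beta_reduce; rw [dif_pos (by omega)],
          Or.inl (Or.inl ⟨rfl, rfl, Or.inl rfl⟩)⟩
      · refine ⟨Sum.inr ⟨(u, v, ⟨i, by omega⟩),
            huv, by show 0 < i; omega, by show i < 2*l+1; omega⟩,
          Sum.inl v, by beta_reduce; rw [dif_pos (by omega)],
          by beta_reduce; rw [dif_neg (by omega), if_neg (by omega)],
          Or.inl (Or.inr ⟨rfl, by show i = 2*l+1-1; omega⟩)⟩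

/-- The interval sets used for the hom Λ → Ω -/
def ISet (u v : G.V) (i j : ℕ) : Set G.V :=
  if (i + j) % 2 = 0 then insert u {w | G.Adj v w ∧ 2*l+1 < i + j}
  else insert v {w | G.Adj u w ∧ i < j}

lemma ISet_flip (u v : G.V) (i j : ℕ) (hi : i ≤ 2*l+1) :
    ISet G l v u i j = ISet G l u v (2*l+1-i) j := by
  ext w
  simp only [ISet, Set.mem_insert_iff, Set.mem_setOf_eq]
  rcases Nat.lt_or_ge ((i+j) % 2) 1 with hp | hp
  · rw [if_pos (by omega), if_neg (by omega)]
    constructor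
    · rintro (rfl | ⟨h, hc⟩)
      · exact Or.inl rfl
      · exact Or.inr ⟨h, by omega⟩
    · rintro (rfl | ⟨h, hc⟩)
      · exact Or.inl rfl
      · exact Or.inr ⟨h, by omega⟩
  · rw [if_neg (by omega), if_pos (by omega)]
    constructor
    · rintro (rfl | ⟨h, hc⟩)
      · exact Or.inl rfl
      · exact Or.inr ⟨h, by omega⟩
    · rintro (rfl | ⟨h, hc⟩)
      · exact Or.inl rfl
      · exact Or.inr ⟨h, by omega⟩

lemma ISet_zero (u v : G.V) (huv : G.Adj u v) (j : ℕ) (hj : j ≤ l) :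
    ISet G l u v 0 j = (if j % 2 = 0 then {u} else {w | G.Adj u w}) := by
  ext w
  simp only [ISet, Set.mem_insert_iff, Set.mem_setOf_eq]
  rcases Nat.lt_or_ge (j % 2) 1 with hp | hp
  · rw [if_pos (by omega), if_pos (by omega)]
    simp only [Set.mem_singleton_iff]
    constructor
    · rintro (rfl | ⟨h, hc⟩)
      · rfl
      · omega
    · rintro rfl; exact Or.inl rfl
  · rw [if_neg (by omega), if_neg (by omega)]
    simp only [Set.mem_setOf_eq]
    constructor
    · rintro (rfl | ⟨h, hc⟩)
      · exact huv
      · exact h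
    · intro h; exact Or.inr ⟨h, by omega⟩

lemma ISet_last (u v : G.V) (huv : G.Adj u v) (j : ℕ) (hj : j ≤ l) :
    ISet G l u v (2*l+1) j = (if j % 2 = 0 then {v} else {w | G.Adj v w}) := by
  ext w
  simp only [ISet, Set.mem_insert_iff, Set.mem_setOf_eq]
  rcases Nat.lt_or_ge (j % 2) 1 with hp | hp
  · rw [if_neg (by omega), if_pos (by omega)]
    simp only [Set.mem_singleton_iff]
    constructor
    · rintro (rfl | ⟨h, hc⟩)
      · rfl
      · omega
    · rintro rfl; exact Or.inl rfl
  · rw [if_pos (by omega), if_neg (by omega)]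
    simp only [Set.mem_setOf_eq]
    constructor
    · rintro (rfl | ⟨h, hc⟩)
      · exact G.symm huv
      · exact h
    · intro h; exact Or.inr ⟨h, by omega⟩

lemma ISet_single (u v : G.V) (i : ℕ) (hi : i ≤ 2*l+1) :
    ∃ x, ISet G l u v i 0 = {x} := by
  rcases Nat.lt_or_ge (i % 2) 1 with hp | hp
  · refine ⟨u, ?_⟩
    ext w
    simp only [ISet, Set.mem_insert_iff, Set.mem_setOf_eq, Set.mem_singleton_iff]
    rw [if_pos (by omega)]
    constructor
    · rintro (rfl | ⟨h, hc⟩)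
      · rfl
      · omega
    · rintro rfl; exact Or.inl rfl
  · refine ⟨v, ?_⟩
    ext w
    simp only [ISet, Set.mem_insert_iff, Set.mem_setOf_eq, Set.mem_singleton_iff]
    rw [if_neg (by omega)]
    constructor
    · rintro (rfl | ⟨h, hc⟩)
      · rfl
      · omega
    · rintro rfl; exact Or.inl rfl

lemma ISet_join (u v : G.V) (huv : G.Adj u v) (i j : ℕ) (hj : j < l) :
    G.Join (ISet G l u v i j) (ISet G l u v i (j+1)) := by
  intro a ha b hb
  simp only [ISet, Set.mem_insert_iff, Set.mem_setOf_eq] at ha hb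
  rcases Nat.lt_or_ge ((i+j) % 2) 1 with hp | hp
  · rw [if_pos (by omega)] at ha
    rw [if_neg (by omega)] at hb
    rcases ha with rfl | ⟨ha, hca⟩ <;> rcases hb with rfl | ⟨hb, hcb⟩
    · exact huv
    · exact hb
    · exact G.symm ha
    · omega
  · rw [if_neg (by omega)] at ha
    rw [if_pos (by omega)] at hb
    rcases ha with rfl | ⟨ha, hca⟩ <;> rcases hb with rfl | ⟨hb, hcb⟩
    · exact G.symm huv
    · exact hb
    · exact G.symm ha
    · omega

/-- the Ω-adjacency conditions, at the level of ℕ-indexed families -/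
def OmAdj (A B : ℕ → Set G.V) : Prop :=
  (∀ j < l, A j ⊆ B (j+1) ∧ B j ⊆ A (j+1)) ∧ G.Join (A l) (B l)

lemma OmAdj_symm {A B : ℕ → Set G.V} (h : OmAdj G l A B) : OmAdj G l B A :=
  ⟨fun j hj => ⟨(h.1 j hj).2, (h.1 j hj).1⟩, fun a ha b hb => G.symm (h.2 b hb a ha)⟩

lemma OmAdj_congr {A A' B : ℕ → Set G.V} (hA : ∀ j ≤ l, A j = A' j)
    (h : OmAdj G l A' B) : OmAdj G l A B := by
  refine ⟨fun j hj => ?_, ?_⟩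
  · rw [hA j (by omega), hA (j+1) (by omega)]
    exact h.1 j hj
  · rw [hA l le_rfl]
    exact h.2

lemma ISet_step (u v : G.V) (huv : G.Adj u v) (i : ℕ) (hik : i + 1 ≤ 2*l+1) :
    OmAdj G l (ISet G l u v i) (ISet G l u v (i+1)) := by
  constructor
  · intro j hj
    constructor <;> intro w hw <;>
      simp only [ISet, Set.mem_insert_iff, Set.mem_setOf_eq] at hw ⊢ <;>
      rcases Nat.lt_or_ge ((i+j) % 2) 1 with hp | hp
    · rw [if_pos (by omega)] at hw; rw [if_pos (by omega)]
      rcases hw with rfl | ⟨h, hc⟩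
      · exact Or.inl rfl
      · exact Or.inr ⟨h, by omega⟩
    · rw [if_neg (by omega)] at hw; rw [if_neg (by omega)]
      rcases hw with rfl | ⟨h, hc⟩
      · exact Or.inl rfl
      · exact Or.inr ⟨h, by omega⟩
    · rw [if_neg (by omega)] at hw; rw [if_neg (by omega)]
      rcases hw with rfl | ⟨h, hc⟩
      · exact Or.inl rfl
      · exact Or.inr ⟨h, by omega⟩
    · rw [if_pos (by omega)] at hw; rw [if_pos (by omega)]
      rcases hw with rfl | ⟨h, hc⟩
      · exact Or.inl rfl
      · exact Or.inr ⟨h, by omega⟩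
  · intro a ha b hb
    simp only [ISet, Set.mem_insert_iff, Set.mem_setOf_eq] at ha hb
    rcases Nat.lt_or_ge ((i+l) % 2) 1 with hp | hp
    · rw [if_pos (by omega)] at ha; rw [if_neg (by omega)] at hb
      rcases ha with rfl | ⟨ha, hca⟩ <;> rcases hb with rfl | ⟨hb, hcb⟩
      · exact huv
      · exact hb
      · exact G.symm ha
      · omega
    · rw [if_neg (by omega)] at ha; rw [if_pos (by omega)] at hb
      rcases ha with rfl | ⟨ha, hca⟩ <;> rcases hb with rfl | ⟨hb, hcb⟩
      · exact G.symm huv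
      · exact hb
      · exact G.symm ha
      · omega

/-- ℕ-indexed family associated to a raw subdivision vertex -/
def HS : G.SubdivRaw (2*l+1) → ℕ → Set G.V
  | .inl u => fun j => if j % 2 = 0 then {u} else {w | G.Adj u w}
  | .inr p => fun j => ISet G l p.1.1 p.1.2.1 p.1.2.2.val j

lemma HS_sound {a b : G.SubdivRaw (2*l+1)} (h : G.subdivRel (2*l+1) a b) :
    HS G l a = HS G l b := by
  obtain ⟨p, q, rfl, rfl, h1, h2, h3⟩ := h
  obtain ⟨hpadj, hp0, hpk⟩ := p.2
  obtain ⟨hqadj, hq0, hqk⟩ := q.2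
  funext j
  show ISet G l p.1.1 p.1.2.1 p.1.2.2.val j = ISet G l q.1.1 q.1.2.1 q.1.2.2.val j
  rw [← h2, ← h1, ISet_flip G l p.1.1 p.1.2.1 q.1.2.2.val j (by omega),
    show 2*l+1 - q.1.2.2.val = p.1.2.2.val from by omega]

/-- Ω-vertex conditions for HS -/
lemma HS_single (a : G.SubdivRaw (2*l+1)) : ∃ x, HS G l a 0 = {x} := by
  cases a with
  | inl u => exact ⟨u, by simp [HS]⟩
  | inr p => exact ISet_single G l _ _ _ (by have := p.2.2.2; omega)

lemma HS_join (a : G.SubdivRaw (2*l+1)) (j : ℕ) (hj : j < l) :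
    G.Join (HS G l a j) (HS G l a (j+1)) := by
  cases a with
  | inl u =>
    intro x hx y hy
    simp only [HS] at hx hy
    rcases Nat.lt_or_ge (j % 2) 1 with hp | hp
    · rw [if_pos (by omega)] at hx; rw [if_neg (by omega)] at hy
      simp only [Set.mem_singleton_iff] at hx
      simp only [Set.mem_setOf_eq] at hy
      subst hx; exact hy
    · rw [if_neg (by omega)] at hx; rw [if_pos (by omega)] at hy
      simp only [Set.mem_singleton_iff] at hy
      simp only [Set.mem_setOf_eq] at hx
      subst hy; exact G.symm hx
  | inr p => exact ISet_join G l _ _ p.2.1 _ j hj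

/-- the main edge lemma -/
lemma HS_adj {a b : G.SubdivRaw (2*l+1)} (h : G.subdivAdjRaw (2*l+1) a b) :
    OmAdj G l (HS G l a) (HS G l b) := by
  cases a with
  | inl u =>
    cases b with
    | inl v =>
      obtain ⟨hk, huv⟩ := h
      have hl : l = 0 := by omega
      subst hl
      refine ⟨fun j hj => by omega, ?_⟩
      intro x hx y hy
      simp only [HS, if_pos (by norm_num : (0:ℕ) % 2 = 0), Set.mem_singleton_iff] at hx hy
      subst hx; subst hy; exact huv
    | inr p =>
      obtain ⟨huv, hi0, hik⟩ := p.2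
      rcases h with ⟨h1, h2⟩ | ⟨h1, h2⟩
      · -- p = (u, v, 1)
        have e1 : ∀ j ≤ l, HS G l (Sum.inl u) j = ISet G l u p.1.2.1 0 j := by
          intro j hj
          rw [ISet_zero G l u p.1.2.1 (h1 ▸ huv) j hj]; simp [HS]
        refine OmAdj_congr G l e1 ?_
        have hstep := ISet_step G l u p.1.2.1 (h1 ▸ huv) 0 (by omega)
        have e2 : HS G l (Sum.inr p) = ISet G l u p.1.2.1 1 := by
          funext j; simp only [HS, h1, h2]
        rw [e2]
        exact hstep
      · -- p = (a, u, k-1)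
        have e1 : ∀ j ≤ l, HS G l (Sum.inl u) j = ISet G l p.1.1 u (2*l+1) j := by
          intro j hj
          rw [ISet_last G l p.1.1 u (h1 ▸ huv) j hj]; simp [HS]
        refine OmAdj_congr G l e1 ?_
        refine OmAdj_symm G l ?_
        have hstep := ISet_step G l p.1.1 u (h1 ▸ huv) (2*l) (by omega)
        have e2 : HS G l (Sum.inr p) = ISet G l p.1.1 u (2*l) := by
          funext j
          show ISet G l p.1.1 p.1.2.1 p.1.2.2.val j = _
          rw [h1, show p.1.2.2.val = 2*l from by omega]
        rw [e2]
        exact hstep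
  | inr p =>
    cases b with
    | inl u =>
      obtain ⟨huv, hi0, hik⟩ := p.2
      refine OmAdj_symm G l ?_
      rcases h with ⟨h1, h2⟩ | ⟨h1, h2⟩
      · have e1 : ∀ j ≤ l, HS G l (Sum.inl u) j = ISet G l u p.1.2.1 0 j := by
          intro j hj
          rw [ISet_zero G l u p.1.2.1 (h1 ▸ huv) j hj]; simp [HS]
        refine OmAdj_congr G l e1 ?_
        have hstep := ISet_step G l u p.1.2.1 (h1 ▸ huv) 0 (by omega)
        have e2 : HS G l (Sum.inr p) = ISet G l u p.1.2.1 1 := by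
          funext j; simp only [HS, h1, h2]
        rw [e2]
        exact hstep
      · have e1 : ∀ j ≤ l, HS G l (Sum.inl u) j = ISet G l p.1.1 u (2*l+1) j := by
          intro j hj
          rw [ISet_last G l p.1.1 u (h1 ▸ huv) j hj]; simp [HS]
        refine OmAdj_congr G l e1 ?_
        refine OmAdj_symm G l ?_
        have hstep := ISet_step G l p.1.1 u (h1 ▸ huv) (2*l) (by omega)
        have e2 : HS G l (Sum.inr p) = ISet G l p.1.1 u (2*l) := by
          funext j
          show ISet G l p.1.1 p.1.2.1 p.1.2.2.val j = _
          rw [h1, show p.1.2.2.val = 2*l from by omega]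
        rw [e2]
        exact hstep
    | inr q =>
      obtain ⟨huv, hi0, hik⟩ := p.2
      obtain ⟨huv', hi0', hik'⟩ := q.2
      have ep : HS G l (Sum.inr p) = ISet G l p.1.1 p.1.2.1 p.1.2.2.val := rfl
      rcases h with ⟨h1, h2, h3 | h3⟩ | ⟨h1, h2, h3⟩
      · -- q = (u,v,i+1)
        have eq2 : HS G l (Sum.inr q) = ISet G l p.1.1 p.1.2.1 (p.1.2.2.val + 1) := by
          funext j; simp only [HS, ← h1, ← h2, h3]
        rw [ep, eq2]
        exact ISet_step G l _ _ huv _ (by omega)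
      · -- q = (u,v,i-1)
        have eq2 : HS G l (Sum.inr q) = ISet G l p.1.1 p.1.2.1 q.1.2.2.val := by
          funext j; simp only [HS, ← h1, ← h2]
        rw [ep, eq2, show p.1.2.2.val = q.1.2.2.val + 1 from by omega]
        exact OmAdj_symm G l (ISet_step G l _ _ huv _ (by omega))
      · -- reversed orientation: q = (v,u,i') with i+i' = k ± 1
        have eq2 : HS G l (Sum.inr q) = ISet G l p.1.1 p.1.2.1 (2*l+1 - q.1.2.2.val) := by
          funext j
          show ISet G l q.1.1 q.1.2.1 q.1.2.2.val j = _
          rw [← h2, ← h1, ISet_flip G l p.1.1 p.1.2.1 q.1.2.2.val j (by omega)]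
        rcases h3 with h3 | h3
        · rw [ep, eq2, show p.1.2.2.val = (2*l+1 - q.1.2.2.val) + 1 from by omega]
          exact OmAdj_symm G l (ISet_step G l _ _ huv _ (by omega))
        · rw [ep, eq2, show 2*l+1 - q.1.2.2.val = p.1.2.2.val + 1 from by omega]
          exact ISet_step G l _ _ huv _ (by omega)

end Subdiv

section Assemble
variable (G : FGraph) (l : ℕ)

def toOmegaVert (a : G.SubdivRaw (2*l+1)) : G.OmegaVert l :=
  ⟨fun j => HS G l a j.val, HS_single G l a,
   fun i => HS_join G l a i.val i.isLt⟩

def omegaMap : (G.subdiv (2*l+1)).V → (G.omega l).V :=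
  Quot.lift (toOmegaVert G l)
    (fun _ _ h => Subtype.ext (funext fun j => congrFun (HS_sound G l h) j.val))

lemma omAdj_to_omega {a b : G.SubdivRaw (2*l+1)} (h : OmAdj G l (HS G l a) (HS G l b)) :
    (G.omega l).Adj (toOmegaVert G l a) (toOmegaVert G l b) :=
  ⟨fun i => ⟨(h.1 i.val i.isLt).1, (h.1 i.val i.isLt).2⟩, h.2⟩

lemma lambda_hom_omega : (G.subdiv (2*l+1)).Hom (G.omega l) := by
  refine ⟨omegaMap G l, ?_⟩
  rintro x y ⟨a, b, rfl, rfl, h | h⟩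
  · exact omAdj_to_omega G l (HS_adj G l h)
  · exact (G.omega l).symm (omAdj_to_omega G l (HS_adj G l h))

end Assemble

end PfAux

/-- `Γ_k(Ω_k(G)) ↔ G` and `Γ_k(Λ_k(G)) ↔ G` for odd `k = 2ℓ+1`. -/
theorem pow_omega_pow_subdiv_equiv (G : FGraph) (l : ℕ) :
    ((G.omega l).pow (2*l+1)).HomEquiv G ∧
    ((G.subdiv (2*l+1)).pow (2*l+1)).HomEquiv G := by
  have hpow := PfAux.pow_hom (2*l+1) (PfAux.lambda_hom_omega G l)
  exact ⟨⟨PfAux.counit G l, PfAux.hom_comp (PfAux.unit G l) hpow⟩,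
    ⟨PfAux.hom_comp hpow (PfAux.counit G l), PfAux.unit G l⟩⟩
end

section
/- For every odd k and all graphs G, H: G → H if and only if Ω_k(G) → Ω_k(H). -/
namespace OmegaAux

/-- The `j`-th vertex (coordinate sets) of the canonical walk in `Ω(G)`
joining `η(u)` to `η(v)`, for an edge `uv`. -/
def wset (G : FGraph) (l : ℕ) (u v : G.V) (j i : ℕ) : Set G.V :=
  {x | (x = u ∧ (i + j) % 2 = 0 ∧ j < 2*l+1)
     ∨ (x = v ∧ (i + j) % 2 = 1 ∧ 0 < j)
     ∨ (G.Adj u x ∧ (i + j) % 2 = 1 ∧ j ≤ i)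
     ∨ (G.Adj v x ∧ (i + j) % 2 = 0 ∧ 2*l+1 ≤ i + j)}

lemma adj_of_mem {G : FGraph} {l : ℕ} {u v : G.V} (huv : G.Adj u v)
    {j1 j2 c1 c2 : ℕ} {a b : G.V}
    (hside : (j1 = j2 ∧ c2 = c1 + 1 ∧ c2 ≤ l) ∨ (c1 = l ∧ c2 = l ∧ j2 = j1 + 1))
    (ha : a ∈ wset G l u v j1 c1) (hb : b ∈ wset G l u v j2 c2) :
    G.Adj a b := by
  simp only [wset, Set.mem_setOf_eq] at ha hb
  rcases hside with ⟨h1, h2, h3⟩ | ⟨h1, h2, h3⟩ <;>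
  rcases ha with ⟨rfl, p1, p2⟩ | ⟨rfl, p1, p2⟩ | ⟨hA, p1, p2⟩ | ⟨hA, p1, p2⟩ <;>
  rcases hb with ⟨rfl, q1, q2⟩ | ⟨rfl, q1, q2⟩ | ⟨hB, q1, q2⟩ | ⟨hB, q1, q2⟩ <;>
  first
    | exact huv
    | exact G.symm huv
    | exact hB
    | exact G.symm hA
    | (exfalso; omega)

lemma wset_subset_left {G : FGraph} {l : ℕ} {u v : G.V} (huv : G.Adj u v)
    {j i : ℕ} (hj : j + 1 ≤ 2*l+1) :
    wset G l u v j i ⊆ wset G l u v (j+1) (i+1) := by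
  intro x hx
  simp only [wset, Set.mem_setOf_eq] at hx ⊢
  rcases hx with ⟨rfl, p1, p2⟩ | ⟨rfl, p1, p2⟩ | ⟨hA, p1, p2⟩ | ⟨hA, p1, p2⟩
  · rcases Nat.lt_or_ge (j+1) (2*l+1) with h | h
    · exact Or.inl ⟨rfl, by omega, h⟩
    · exact Or.inr (Or.inr (Or.inr ⟨G.symm huv, by omega, by omega⟩))
  · exact Or.inr (Or.inl ⟨rfl, by omega, by omega⟩)
  · exact Or.inr (Or.inr (Or.inl ⟨hA, by omega, by omega⟩))
  · exact Or.inr (Or.inr (Or.inr ⟨hA, by omega, by omega⟩))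

lemma wset_subset_right {G : FGraph} {l : ℕ} {u v : G.V} (huv : G.Adj u v)
    {j i : ℕ} :
    wset G l u v (j+1) i ⊆ wset G l u v j (i+1) := by
  intro x hx
  simp only [wset, Set.mem_setOf_eq] at hx ⊢
  rcases hx with ⟨rfl, p1, p2⟩ | ⟨rfl, p1, p2⟩ | ⟨hA, p1, p2⟩ | ⟨hA, p1, p2⟩
  · exact Or.inl ⟨rfl, by omega, by omega⟩
  · rcases Nat.eq_zero_or_pos j with rfl | h
    · exact Or.inr (Or.inr (Or.inl ⟨huv, by omega, by omega⟩))
    · exact Or.inr (Or.inl ⟨rfl, by omega, h⟩)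
  · exact Or.inr (Or.inr (Or.inl ⟨hA, by omega, by omega⟩))
  · exact Or.inr (Or.inr (Or.inr ⟨hA, by omega, by omega⟩))

lemma wset_zero {G : FGraph} {l : ℕ} {u v : G.V} {j : ℕ} (hj : j ≤ 2*l+1) :
    ∃ w, wset G l u v j 0 = {w} := by
  by_cases h : j % 2 = 0
  · refine ⟨u, Set.ext fun x => ?_⟩
    simp only [wset, Set.mem_setOf_eq, Set.mem_singleton_iff]
    constructor
    · rintro (⟨rfl, p1, p2⟩ | ⟨rfl, p1, p2⟩ | ⟨hA, p1, p2⟩ | ⟨hA, p1, p2⟩)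
      · rfl
      · exfalso; omega
      · exfalso; omega
      · exfalso; omega
    · rintro rfl
      exact Or.inl ⟨rfl, by omega, by omega⟩
  · refine ⟨v, Set.ext fun x => ?_⟩
    simp only [wset, Set.mem_setOf_eq, Set.mem_singleton_iff]
    constructor
    · rintro (⟨rfl, p1, p2⟩ | ⟨rfl, p1, p2⟩ | ⟨hA, p1, p2⟩ | ⟨hA, p1, p2⟩)
      · exfalso; omega
      · rfl
      · exfalso; omega
      · exfalso; omega
    · rintro rfl
      exact Or.inr (Or.inl ⟨rfl, by omega, by omega⟩)

/-- The bundled `j`-th vertex of the walk, as a vertex of `Ω(G)`. -/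
def wvert (G : FGraph) (l : ℕ) {u v : G.V} (huv : G.Adj u v) (j : ℕ) : (G.omega l).V := by
  refine ⟨fun i => wset G l u v (min j (2*l+1)) i.val, ?_, ?_⟩
  · simpa using wset_zero (G := G) (l := l) (u := u) (v := v) (min_le_right j (2*l+1))
  · intro i a ha b hb
    refine adj_of_mem huv (Or.inl ⟨rfl, ?_, ?_⟩) ha hb
    · simp
    · have := i.isLt
      simp only [Fin.val_succ]
      omega

lemma wvert_adj {G : FGraph} {l : ℕ} {u v : G.V} (huv : G.Adj u v) {j : ℕ}
    (hj : j < 2*l+1) :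
    (G.omega l).Adj (wvert G l huv j) (wvert G l huv (j+1)) := by
  have e1 : min j (2*l+1) = j := by omega
  have e2 : min (j+1) (2*l+1) = j+1 := by omega
  refine ⟨fun i => ⟨?_, ?_⟩, ?_⟩
  · show wset G l u v (min j (2*l+1)) (i.castSucc).val ⊆
      wset G l u v (min (j+1) (2*l+1)) (i.succ).val
    rw [e1, e2, Fin.coe_castSucc, Fin.val_succ]
    exact wset_subset_left huv (by omega)
  · show wset G l u v (min (j+1) (2*l+1)) (i.castSucc).val ⊆
      wset G l u v (min j (2*l+1)) (i.succ).val
    rw [e1, e2, Fin.coe_castSucc, Fin.val_succ]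
    exact wset_subset_right huv
  · intro a ha b hb
    exact adj_of_mem huv (Or.inr ⟨by simp, by simp, by omega⟩) ha hb

/-- Coordinate sets of the canonical vertex `η(x)` of `Ω(G)`. -/
def etafun (G : FGraph) (x : G.V) (i : ℕ) : Set G.V :=
  if i % 2 = 0 then {x} else {y | G.Adj x y}

/-- The canonical vertex `η(x)` of `Ω(G)`. -/
def eta (G : FGraph) (l : ℕ) (x : G.V) : (G.omega l).V := by
  refine ⟨fun i => etafun G x i.val, ⟨x, ?_⟩, ?_⟩
  · simp [etafun]
  · intro i a ha b hb
    have h1 : ((i.castSucc : Fin (l+1)) : ℕ) = i.val := rfl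
    have h2 : ((i.succ : Fin (l+1)) : ℕ) = i.val + 1 := rfl
    show G.Adj a b
    by_cases h : i.val % 2 = 0
    · have ha' : a ∈ ({x} : Set G.V) := by
        simpa [etafun, h1, h] using ha
      have hx : (i.val + 1) % 2 ≠ 0 := by omega
      have hb' : b ∈ {y | G.Adj x y} := by
        simpa [etafun, h2, hx] using hb
      rw [Set.mem_singleton_iff] at ha'
      subst ha'
      exact hb'
    · have ha' : a ∈ {y | G.Adj x y} := by
        simpa [etafun, h1, h] using ha
      have hx : (i.val + 1) % 2 = 0 := by omega
      have hb' : b ∈ ({x} : Set G.V) := by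
        simpa [etafun, h2, hx] using hb
      rw [Set.mem_singleton_iff] at hb'
      subst hb'
      exact G.symm ha'

lemma wvert_zero {G : FGraph} {l : ℕ} {u v : G.V} (huv : G.Adj u v) :
    wvert G l huv 0 = eta G l u := by
  apply Subtype.ext
  funext i
  show wset G l u v (min 0 (2*l+1)) i.val = etafun G u i.val
  have hi : i.val < l + 1 := i.isLt
  rw [show min 0 (2*l+1) = 0 from by omega]
  ext x
  simp only [wset, etafun, Set.mem_setOf_eq]
  by_cases h : i.val % 2 = 0
  · rw [if_pos h]
    simp only [Set.mem_singleton_iff]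
    constructor
    · rintro (⟨rfl, p1, p2⟩ | ⟨rfl, p1, p2⟩ | ⟨hA, p1, p2⟩ | ⟨hA, p1, p2⟩)
      · rfl
      · exfalso; omega
      · exfalso; omega
      · exfalso; omega
    · rintro rfl
      exact Or.inl ⟨rfl, by omega, by omega⟩
  · rw [if_neg h]
    simp only [Set.mem_setOf_eq]
    constructor
    · rintro (⟨rfl, p1, p2⟩ | ⟨rfl, p1, p2⟩ | ⟨hA, p1, p2⟩ | ⟨hA, p1, p2⟩)
      · exfalso; omega
      · exfalso; omega
      · exact hA
      · exfalso; omega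
    · intro hA
      exact Or.inr (Or.inr (Or.inl ⟨hA, by omega, by omega⟩))

lemma wvert_last {G : FGraph} {l : ℕ} {u v : G.V} (huv : G.Adj u v) :
    wvert G l huv (2*l+1) = eta G l v := by
  apply Subtype.ext
  funext i
  show wset G l u v (min (2*l+1) (2*l+1)) i.val = etafun G v i.val
  have hi : i.val < l + 1 := i.isLt
  rw [show min (2*l+1) (2*l+1) = 2*l+1 from by omega]
  ext x
  simp only [wset, etafun, Set.mem_setOf_eq]
  by_cases h : i.val % 2 = 0
  · rw [if_pos h]
    simp only [Set.mem_singleton_iff]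
    constructor
    · rintro (⟨rfl, p1, p2⟩ | ⟨rfl, p1, p2⟩ | ⟨hA, p1, p2⟩ | ⟨hA, p1, p2⟩)
      · exfalso; omega
      · rfl
      · exfalso; omega
      · exfalso; omega
    · rintro rfl
      exact Or.inr (Or.inl ⟨rfl, by omega, by omega⟩)
  · rw [if_neg h]
    simp only [Set.mem_setOf_eq]
    constructor
    · rintro (⟨rfl, p1, p2⟩ | ⟨rfl, p1, p2⟩ | ⟨hA, p1, p2⟩ | ⟨hA, p1, p2⟩)
      · exfalso; omega
      · exfalso; omega
      · exfalso; omega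
      · exact hA
    · intro hA
      exact Or.inr (Or.inr (Or.inr ⟨hA, by omega, by omega⟩))

/-- Counit-style lemma: a walk of length `2l+1` in `Ω(K)` forces the
head singletons of its endpoints to be adjacent. -/
lemma counit (K : FGraph) (l : ℕ) (ω : ℕ → (K.omega l).V)
    (hadj : ∀ j, j < 2*l+1 → (K.omega l).Adj (ω j) (ω (j+1)))
    {a b : K.V} (ha : (ω 0).1 0 = {a}) (hb : (ω (2*l+1)).1 0 = {b}) :
    K.Adj a b := by
  have claim1 : ∀ j, ∀ h : j ≤ l, a ∈ (ω j).1 ⟨j, by omega⟩ := by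
    intro j
    induction j with
    | zero =>
      intro h
      have e : (⟨0, by omega⟩ : Fin (l+1)) = 0 := rfl
      rw [e, ha]
      rfl
    | succ n ih =>
      intro h
      have hlt : n < l := by omega
      have hstep := ((hadj n (by omega)).1 ⟨n, hlt⟩).1
      exact hstep (ih (by omega))
  have claim2 : ∀ j, ∀ h : j ≤ l, b ∈ (ω (2*l+1-j)).1 ⟨j, by omega⟩ := by
    intro j
    induction j with
    | zero =>
      intro h
      have e : (⟨0, by omega⟩ : Fin (l+1)) = 0 := rfl
      rw [e, Nat.sub_zero, hb]
      rfl
    | succ n ih =>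
      intro h
      have hlt : n < l := by omega
      have hstep := ((hadj (2*l+1-(n+1)) (by omega)).1 ⟨n, hlt⟩).2
      have e : 2*l+1-(n+1)+1 = 2*l+1-n := by omega
      rw [e] at hstep
      exact hstep (ih (by omega))
  have h1 := claim1 l le_rfl
  have h2 := claim2 l le_rfl
  have e : 2*l+1-l = l+1 := by omega
  rw [e] at h2
  exact (hadj l (by omega)).2 a h1 b h2

end OmegaAux

/-- `G → H` iff `Ω_{2ℓ+1}(G) → Ω_{2ℓ+1}(H)`. -/
theorem hom_iff_omega_hom (l : ℕ) (G H : FGraph) :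
    G.Hom H ↔ (G.omega l).Hom (H.omega l) := by
  constructor
  · rintro ⟨f, hf⟩
    refine ⟨fun A => ⟨fun i => f '' A.1 i, ?_, ?_⟩, ?_⟩
    · obtain ⟨v, hv⟩ := A.2.1
      refine ⟨f v, ?_⟩
      show f '' A.1 0 = {f v}
      rw [hv, Set.image_singleton]
    · intro i a ha b hb
      obtain ⟨a', ha', rfl⟩ := ha
      obtain ⟨b', hb', rfl⟩ := hb
      exact hf (A.2.2 i a' ha' b' hb')
    · intro A B hAB
      refine ⟨fun i => ⟨Set.image_mono (f := f) (hAB.1 i).1, Set.image_mono (f := f) (hAB.1 i).2⟩, ?_⟩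
      intro a ha b hb
      obtain ⟨a', ha', rfl⟩ := ha
      obtain ⟨b', hb', rfl⟩ := hb
      exact hf (hAB.2 a' ha' b' hb')
  · rintro ⟨Φ, hΦ⟩
    choose f hf using fun x : G.V => (Φ (OmegaAux.eta G l x)).2.1
    refine ⟨f, ?_⟩
    intro u v huv
    refine OmegaAux.counit H l (fun j => Φ (OmegaAux.wvert G l huv j)) ?_ ?_ ?_
    · intro j hj
      exact hΦ (OmegaAux.wvert_adj huv hj)
    · show (Φ (OmegaAux.wvert G l huv 0)).1 0 = {f u}
      rw [OmegaAux.wvert_zero huv]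
      exact hf u
    · show (Φ (OmegaAux.wvert G l huv (2*l+1))).1 0 = {f v}
      rw [OmegaAux.wvert_last huv]
      exact hf v
end
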